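/- arXiv:1401.7134 — 2 statements merged into one kernel-verified Lean document; each statement's English description precedes it below -/
import Mathlib

section
/- Let X, Y be finite random variables with joint law P_{XY}, marginals P_X, P_Y, and let Ȳ ~ P_Y be independent of X. With i(x;y) = log(P_{XY}(x,y)/(P_X(x)P_Y(y))), for every γ > 0: P(i(X;Y) ≤ log γ) + γ·P(i(X;Ȳ) > log γ) = E[exp(−|i(X;Y) − log γ|⁺)], where |x|⁺ = max(x,0). -/
/-- DT-bound identity: P(i(X;Y) ≤ log γ) + γ·P(i(X;Ȳ) > log γ)
  = E[exp(−|i(X;Y) − log γ|⁺)], where i(x;y) = log(P_XY(x,y)/(P_X(x)P_Y(y))),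
the events are expressed via the equivalent support-safe comparisons
{P_XY ≤ γ P_X P_Y} and {P_XY > γ P_X P_Y}, and the expectation is over (X,Y) ~ P_XY. -/
theorem stmt_5 {X Y : Type*} [Fintype X] [Fintype Y]
    (pXY : X → Y → ℝ) (hnn : ∀ x y, 0 ≤ pXY x y)
    (hsum : ∑ x, ∑ y, pXY x y = 1)
    (pX : X → ℝ) (hpX : ∀ x, pX x = ∑ y, pXY x y)
    (pY : Y → ℝ) (hpY : ∀ y, pY y = ∑ x, pXY x y)
    (γ : ℝ) (hγ : 0 < γ) :
    (∑ x, ∑ y, pXY x y * (if pXY x y ≤ γ * (pX x * pY y) then (1 : ℝ) else 0))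
      + γ * ∑ x, ∑ y, pX x * pY y * (if pXY x y > γ * (pX x * pY y) then (1 : ℝ) else 0)
    = ∑ x, ∑ y, pXY x y *
        Real.exp (-(max (Real.log (pXY x y / (pX x * pY y)) - Real.log γ) 0)) := by
  rw [Finset.mul_sum, ← Finset.sum_add_distrib]
  refine Finset.sum_congr rfl fun x _ => ?_
  rw [Finset.mul_sum, ← Finset.sum_add_distrib]
  refine Finset.sum_congr rfl fun y _ => ?_
  -- key fact: if pX x * pY y = 0 then pXY x y = 0
  have hkey : pX x * pY y = 0 → pXY x y = 0 := by
    intro h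
    rcases mul_eq_zero.mp h with h | h
    · have := (Finset.sum_eq_zero_iff_of_nonneg (fun j _ => hnn x j)).mp
        ((hpX x).symm.trans h) y (Finset.mem_univ y)
      exact this
    · exact (Finset.sum_eq_zero_iff_of_nonneg (fun i _ => hnn i y)).mp
        ((hpY y).symm.trans h) x (Finset.mem_univ x)
  have hq : 0 ≤ pX x * pY y :=
    mul_nonneg (by rw [hpX x]; exact Finset.sum_nonneg fun j _ => hnn x j)
      (by rw [hpY y]; exact Finset.sum_nonneg fun i _ => hnn i y)
  by_cases hle : pXY x y ≤ γ * (pX x * pY y)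
  · rw [if_pos hle, if_neg (not_lt.mpr hle)]
    by_cases hp0 : pXY x y = 0
    · simp [hp0]
    · have hppos : 0 < pXY x y := lt_of_le_of_ne (hnn x y) (Ne.symm hp0)
      have hqpos : 0 < pX x * pY y := by
        rcases hq.lt_or_eq with h | h
        · exact h
        · exact absurd (hkey h.symm) hp0
      have hmax : max (Real.log (pXY x y / (pX x * pY y)) - Real.log γ) 0 = 0 := by
        apply max_eq_right
        have : Real.log (pXY x y / (pX x * pY y)) ≤ Real.log γ := by
          apply Real.log_le_log (div_pos hppos hqpos)
          rw [div_le_iff₀ hqpos]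
          linarith
        linarith
      rw [hmax]
      simp
  · rw [if_neg hle, if_pos (lt_of_not_ge hle)]
    have hgt : γ * (pX x * pY y) < pXY x y := lt_of_not_ge hle
    have hppos : 0 < pXY x y := lt_of_le_of_lt (mul_nonneg hγ.le hq) hgt
    have hqpos : 0 < pX x * pY y := by
      rcases hq.lt_or_eq with h | h
      · exact h
      · exact absurd (hkey h.symm) hppos.ne'
    have hratio : γ < pXY x y / (pX x * pY y) := by
      rw [lt_div_iff₀ hqpos]; linarith [mul_comm γ (pX x * pY y)]
    have hmax : max (Real.log (pXY x y / (pX x * pY y)) - Real.log γ) 0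
        = Real.log (pXY x y / (pX x * pY y)) - Real.log γ := by
      apply max_eq_left
      have := Real.log_lt_log hγ hratio
      linarith
    rw [hmax]
    rw [neg_sub, Real.exp_sub, Real.exp_log hγ,
      Real.exp_log (div_pos hppos hqpos)]
    field_simp
    ring
end

section
/- Consider a channel with input alphabet 𝒳, output alphabet 𝒴 (both finite), transition kernel P_{Y|X}, and input distribution P_X. For a codebook of M codewords c₁,…,c_M drawn i.i.d. from P_X, and the threshold decoder that outputs the smallest index j such that i(c_j; y) > log((M−1)/2), the average error probability (averaged over codebooks and equiprobable messages) is at most P(i(X;Y) ≤ log((M−1)/2)) + ((M−1)/2)·P(i(X;Ȳ) > log((M−1)/2)), where (X,Y) ~ P_X P_{Y|X} and Ȳ ~ P_Y is independent of X. -/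
open scoped Classical

/-- The threshold decoder: outputs the smallest index `j` such that the information
density test passes, i.e. `i(c j; y) > log t`, equivalently `W (c j) y > t * pY y`. -/
noncomputable def dtDecode {𝒳 𝒴 : Type*} [Fintype 𝒳] (M : ℕ)
    (W : 𝒳 → 𝒴 → ℝ) (pY : 𝒴 → ℝ) (t : ℝ) (c : Fin M → 𝒳) (y : 𝒴) : Option (Fin M) :=
  (Finset.univ.filter (fun j : Fin M => t * pY y < W (c j) y)).min

lemma dt_sum_pi_prod {𝒳 : Type*} [Fintype 𝒳] {M : ℕ} (g : Fin M → 𝒳 → ℝ) :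
    ∑ c : Fin M → 𝒳, ∏ k, g k (c k) = ∏ k, ∑ x, g k x :=
  (Fintype.prod_sum g).symm

lemma dt_marg1 {𝒳 : Type*} [Fintype 𝒳] {M : ℕ} (pX : 𝒳 → ℝ) (hs : ∑ x, pX x = 1)
    (j : Fin M) (f : 𝒳 → ℝ) :
    ∑ c : Fin M → 𝒳, (∏ k, pX (c k)) * f (c j) = ∑ x, pX x * f x := by
  have h1 : ∀ c : Fin M → 𝒳, (∏ k, pX (c k)) * f (c j)
      = ∏ k, (pX (c k) * (if k = j then f (c k) else 1)) := by
    intro c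
    rw [Finset.prod_mul_distrib, Finset.prod_ite_eq' Finset.univ j (fun k => f (c k))]
    simp
  simp_rw [h1]
  rw [dt_sum_pi_prod (fun k x => pX x * if k = j then f x else 1)]
  have h2 : ∀ k : Fin M, ∑ x, pX x * (if k = j then f x else 1)
      = if k = j then ∑ x, pX x * f x else 1 := by
    intro k; split <;> simp [hs]
  rw [Finset.prod_congr rfl fun k _ => h2 k,
    Finset.prod_ite_eq' Finset.univ j (fun _ => ∑ x, pX x * f x)]
  simp

lemma dt_marg2 {𝒳 : Type*} [Fintype 𝒳] {M : ℕ} (pX : 𝒳 → ℝ) (hs : ∑ x, pX x = 1)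
    {j j' : Fin M} (hjj : j ≠ j') (f g : 𝒳 → ℝ) :
    ∑ c : Fin M → 𝒳, (∏ k, pX (c k)) * (f (c j) * g (c j'))
      = (∑ x, pX x * f x) * (∑ x, pX x * g x) := by
  have h1 : ∀ c : Fin M → 𝒳, (∏ k, pX (c k)) * (f (c j) * g (c j'))
      = ∏ k, (pX (c k) * ((if k = j then f (c k) else 1) * (if k = j' then g (c k) else 1))) := by
    intro c
    rw [Finset.prod_mul_distrib, Finset.prod_mul_distrib,
      Finset.prod_ite_eq' Finset.univ j (fun k => f (c k)),
      Finset.prod_ite_eq' Finset.univ j' (fun k => g (c k))]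
    simp
  simp_rw [h1]
  rw [dt_sum_pi_prod (fun k x => pX x * ((if k = j then f x else 1) * if k = j' then g x else 1))]
  have h2 : ∀ k : Fin M, ∑ x, pX x * ((if k = j then f x else 1) * (if k = j' then g x else 1))
      = (if k = j then ∑ x, pX x * f x else 1) * (if k = j' then ∑ x, pX x * g x else 1) := by
    intro k
    rcases eq_or_ne k j with rfl | hkj
    · simp [hjj]
    · rcases eq_or_ne k j' with rfl | hkj'
      · simp [hkj]
      · simp [hkj, hkj', hs]
  rw [Finset.prod_congr rfl fun k _ => h2 k, Finset.prod_mul_distrib,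
    Finset.prod_ite_eq' Finset.univ j (fun _ => ∑ x, pX x * f x),
    Finset.prod_ite_eq' Finset.univ j' (fun _ => ∑ x, pX x * g x)]
  simp

lemma dt_decode_bound {𝒳 𝒴 : Type*} [Fintype 𝒳] {M : ℕ} (W : 𝒳 → 𝒴 → ℝ) (pY : 𝒴 → ℝ) (t : ℝ)
    (c : Fin M → 𝒳) (y : 𝒴) (j : Fin M) :
    (if dtDecode M W pY t c y = some j then (0:ℝ) else 1)
      ≤ (if W (c j) y ≤ t * pY y then (1:ℝ) else 0)
        + ∑ j' ∈ Finset.Iio j, (if t * pY y < W (c j') y then (1:ℝ) else 0) := by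
  have hsum_nn : (0:ℝ) ≤ ∑ j' ∈ Finset.Iio j, (if t * pY y < W (c j') y then (1:ℝ) else 0) :=
    Finset.sum_nonneg fun _ _ => by split <;> norm_num
  by_cases h1 : W (c j) y ≤ t * pY y
  · rw [if_pos h1]
    have : (if dtDecode M W pY t c y = some j then (0:ℝ) else 1) ≤ 1 := by split <;> norm_num
    linarith
  · rw [if_neg h1]
    push_neg at h1
    by_cases h2 : dtDecode M W pY t c y = some j
    · rw [if_pos h2]; linarith
    · rw [if_neg h2]
      set s := Finset.univ.filter (fun j' : Fin M => t * pY y < W (c j') y) with hs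
      have hj : j ∈ s := Finset.mem_filter.2 ⟨Finset.mem_univ _, h1⟩
      obtain ⟨b, hb⟩ := Finset.min_of_mem hj
      have hbs : b ∈ s := Finset.mem_of_min hb
      have hbj : b ≤ j := Finset.min_le_of_eq hj hb
      have hbne : b ≠ j := by rintro rfl; exact h2 hb
      have hblt : b < j := lt_of_le_of_ne hbj hbne
      have hbw : t * pY y < W (c b) y := (Finset.mem_filter.1 hbs).2
      have : (1:ℝ) ≤ ∑ j' ∈ Finset.Iio j, (if t * pY y < W (c j') y then (1:ℝ) else 0) := by
        have := Finset.single_le_sum (f := fun j' : Fin M =>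
            (if t * pY y < W (c j') y then (1:ℝ) else 0))
          (fun i _ => by split <;> norm_num) (Finset.mem_Iio.2 hblt)
        rwa [if_pos hbw] at this
      linarith

/-- Dependence-testing bound (Polyanskiy–Poor–Verdú): for a finite channel `W` with input
distribution `pX` (output marginal `pY`), a codebook of `M` i.i.d. codewords and the
threshold decoder with threshold `log((M−1)/2)`, the error probability averaged over
codebooks and equiprobable messages is at most
P(i(X;Y) ≤ log((M−1)/2)) + ((M−1)/2)·P(i(X;Ȳ) > log((M−1)/2)). -/
theorem stmt_6 {𝒳 𝒴 : Type*} [Fintype 𝒳] [Fintype 𝒴]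
    (W : 𝒳 → 𝒴 → ℝ) (hWnn : ∀ x y, 0 ≤ W x y) (hWsum : ∀ x, ∑ y, W x y = 1)
    (pX : 𝒳 → ℝ) (hpXnn : ∀ x, 0 ≤ pX x) (hpXsum : ∑ x, pX x = 1)
    (pY : 𝒴 → ℝ) (hpY : ∀ y, pY y = ∑ x, pX x * W x y)
    (M : ℕ) (hM : 0 < M) :
    ∑ c : Fin M → 𝒳, (∏ j, pX (c j)) *
        ((M : ℝ)⁻¹ * ∑ j, ∑ y,
          W (c j) y * (if dtDecode M W pY (((M : ℝ) - 1) / 2) c y = some j then 0 else 1))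
      ≤ (∑ x, ∑ y, pX x * W x y *
            (if W x y ≤ (((M : ℝ) - 1) / 2) * pY y then (1 : ℝ) else 0))
        + (((M : ℝ) - 1) / 2) *
          ∑ x, ∑ y, pX x * pY y *
            (if W x y > (((M : ℝ) - 1) / 2) * pY y then (1 : ℝ) else 0) := by
  simp only [gt_iff_lt]
  set τ : ℝ := ((M : ℝ) - 1) / 2 with hτdef
  set P : ℝ := ∑ x, ∑ y, pX x * W x y * (if W x y ≤ τ * pY y then (1:ℝ) else 0) with hPdef
  set Q : ℝ := ∑ x, ∑ y, pX x * pY y * (if τ * pY y < W x y then (1:ℝ) else 0) with hQdef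
  have hprod_nn : ∀ c : Fin M → 𝒳, (0:ℝ) ≤ ∏ k, pX (c k) :=
    fun c => Finset.prod_nonneg fun k _ => hpXnn _
  have hQ' : Q = ∑ y, pY y * ∑ x, pX x * (if τ * pY y < W x y then (1:ℝ) else 0) := by
    rw [hQdef, Finset.sum_comm]
    refine Finset.sum_congr rfl fun y _ => ?_
    rw [Finset.mul_sum]
    exact Finset.sum_congr rfl fun x _ => by ring
  -- Step 1: reshape the LHS
  have hL : ∑ c : Fin M → 𝒳, (∏ j, pX (c j)) *
        ((M : ℝ)⁻¹ * ∑ j, ∑ y,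
          W (c j) y * (if dtDecode M W pY τ c y = some j then 0 else 1))
      = (M : ℝ)⁻¹ * ∑ j : Fin M, ∑ c : Fin M → 𝒳, ∑ y, (∏ k, pX (c k)) *
          (W (c j) y * (if dtDecode M W pY τ c y = some j then 0 else 1)) := by
    simp_rw [Finset.mul_sum]
    rw [Finset.sum_comm]
    exact Finset.sum_congr rfl fun j _ => Finset.sum_congr rfl fun c _ =>
      Finset.sum_congr rfl fun y _ => by ring
  rw [hL]
  -- key per-index bound
  have key : ∀ j : Fin M,
      ∑ c : Fin M → 𝒳, ∑ y, (∏ k, pX (c k)) *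
          (W (c j) y * (if dtDecode M W pY τ c y = some j then 0 else 1))
        ≤ P + ((j : ℕ) : ℝ) * Q := by
    intro j
    have step1 : ∑ c : Fin M → 𝒳, ∑ y, (∏ k, pX (c k)) *
          (W (c j) y * (if dtDecode M W pY τ c y = some j then 0 else 1))
        ≤ ∑ c : Fin M → 𝒳, ∑ y, (∏ k, pX (c k)) *
          (W (c j) y * ((if W (c j) y ≤ τ * pY y then (1:ℝ) else 0)
            + ∑ j' ∈ Finset.Iio j, (if τ * pY y < W (c j') y then (1:ℝ) else 0))) := by
      refine Finset.sum_le_sum fun c _ => Finset.sum_le_sum fun y _ => ?_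
      exact mul_le_mul_of_nonneg_left
        (mul_le_mul_of_nonneg_left (dt_decode_bound W pY τ c y j) (hWnn _ _)) (hprod_nn c)
    refine step1.trans (le_of_eq ?_)
    have split : ∑ c : Fin M → 𝒳, ∑ y, (∏ k, pX (c k)) *
          (W (c j) y * ((if W (c j) y ≤ τ * pY y then (1:ℝ) else 0)
            + ∑ j' ∈ Finset.Iio j, (if τ * pY y < W (c j') y then (1:ℝ) else 0)))
        = (∑ c : Fin M → 𝒳, ∑ y, (∏ k, pX (c k)) *
            (W (c j) y * (if W (c j) y ≤ τ * pY y then (1:ℝ) else 0)))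
          + ∑ c : Fin M → 𝒳, ∑ y, ∑ j' ∈ Finset.Iio j, (∏ k, pX (c k)) *
            (W (c j) y * (if τ * pY y < W (c j') y then (1:ℝ) else 0)) := by
      rw [← Finset.sum_add_distrib]
      refine Finset.sum_congr rfl fun c _ => ?_
      rw [← Finset.sum_add_distrib]
      refine Finset.sum_congr rfl fun y _ => ?_
      rw [mul_add, mul_add, Finset.mul_sum, Finset.mul_sum]
    rw [split]
    -- first term equals P
    have hS1 : ∑ c : Fin M → 𝒳, ∑ y, (∏ k, pX (c k)) *
          (W (c j) y * (if W (c j) y ≤ τ * pY y then (1:ℝ) else 0)) = P := by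
      have : ∀ c : Fin M → 𝒳, ∑ y, (∏ k, pX (c k)) *
            (W (c j) y * (if W (c j) y ≤ τ * pY y then (1:ℝ) else 0))
          = (∏ k, pX (c k)) * ∑ y, W (c j) y * (if W (c j) y ≤ τ * pY y then (1:ℝ) else 0) :=
        fun c => (Finset.mul_sum _ _ _).symm
      simp_rw [this]
      rw [dt_marg1 pX hpXsum j
        (fun x => ∑ y, W x y * (if W x y ≤ τ * pY y then (1:ℝ) else 0)), hPdef]
      refine Finset.sum_congr rfl fun x _ => ?_
      rw [Finset.mul_sum]
      exact Finset.sum_congr rfl fun y _ => by ring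
    -- second term equals j * Q
    have hS2 : ∑ c : Fin M → 𝒳, ∑ y, ∑ j' ∈ Finset.Iio j, (∏ k, pX (c k)) *
          (W (c j) y * (if τ * pY y < W (c j') y then (1:ℝ) else 0))
        = ((j : ℕ) : ℝ) * Q := by
      have swap : ∑ c : Fin M → 𝒳, ∑ y, ∑ j' ∈ Finset.Iio j, (∏ k, pX (c k)) *
            (W (c j) y * (if τ * pY y < W (c j') y then (1:ℝ) else 0))
          = ∑ j' ∈ Finset.Iio j, ∑ y, ∑ c : Fin M → 𝒳, (∏ k, pX (c k)) *
            (W (c j) y * (if τ * pY y < W (c j') y then (1:ℝ) else 0)) :=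
        calc ∑ c : Fin M → 𝒳, ∑ y, ∑ j' ∈ Finset.Iio j, (∏ k, pX (c k)) *
              (W (c j) y * (if τ * pY y < W (c j') y then (1:ℝ) else 0))
            = ∑ c : Fin M → 𝒳, ∑ j' ∈ Finset.Iio j, ∑ y, (∏ k, pX (c k)) *
              (W (c j) y * (if τ * pY y < W (c j') y then (1:ℝ) else 0)) :=
              Finset.sum_congr rfl fun c _ => Finset.sum_comm
          _ = ∑ j' ∈ Finset.Iio j, ∑ c : Fin M → 𝒳, ∑ y, (∏ k, pX (c k)) *
              (W (c j) y * (if τ * pY y < W (c j') y then (1:ℝ) else 0)) :=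
              Finset.sum_comm
          _ = ∑ j' ∈ Finset.Iio j, ∑ y, ∑ c : Fin M → 𝒳, (∏ k, pX (c k)) *
              (W (c j) y * (if τ * pY y < W (c j') y then (1:ℝ) else 0)) :=
              Finset.sum_congr rfl fun j' _ => Finset.sum_comm
      rw [swap]
      have inner : ∀ j' ∈ Finset.Iio j,
          ∑ y, ∑ c : Fin M → 𝒳, (∏ k, pX (c k)) *
            (W (c j) y * (if τ * pY y < W (c j') y then (1:ℝ) else 0))
          = ∑ y, pY y * ∑ x, pX x * (if τ * pY y < W x y then (1:ℝ) else 0) := by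
        intro j' hj'
        have hjj : j ≠ j' := (Finset.mem_Iio.1 hj').ne'
        refine Finset.sum_congr rfl fun y _ => ?_
        rw [dt_marg2 pX hpXsum hjj (fun x => W x y)
          (fun x => if τ * pY y < W x y then (1:ℝ) else 0), ← hpY y]
      have hc : ∑ j' ∈ Finset.Iio j, ∑ y, ∑ c : Fin M → 𝒳, (∏ k, pX (c k)) *
            (W (c j) y * (if τ * pY y < W (c j') y then (1:ℝ) else 0))
          = ∑ _j' ∈ Finset.Iio j,
            ∑ y, pY y * ∑ x, pX x * (if τ * pY y < W x y then (1:ℝ) else 0) :=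
        Finset.sum_congr rfl inner
      rw [hc]
      rw [Finset.sum_const]
      rw [Fin.card_Iio]
      rw [nsmul_eq_mul, ← hQ']
    rw [hS1, hS2]
  -- combine
  have hkey : ∑ j : Fin M, ∑ c : Fin M → 𝒳, ∑ y, (∏ k, pX (c k)) *
        (W (c j) y * (if dtDecode M W pY τ c y = some j then 0 else 1))
      ≤ ∑ j : Fin M, (P + ((j : ℕ) : ℝ) * Q) :=
    Finset.sum_le_sum fun j _ => key j
  have hmono := mul_le_mul_of_nonneg_left hkey (by positivity : (0:ℝ) ≤ (M:ℝ)⁻¹)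
  refine hmono.trans (le_of_eq ?_)
  have hMne : (M:ℝ) ≠ 0 := Nat.cast_ne_zero.2 hM.ne'
  have hS : ∑ j : Fin M, ((j : ℕ) : ℝ) = (M:ℝ) * ((M:ℝ) - 1) / 2 := by
    rw [Fin.sum_univ_eq_sum_range (fun i => (i:ℝ)) M]
    have h2 := Finset.sum_range_id_mul_two M
    have h3 := congrArg (fun n : ℕ => (n:ℝ)) h2
    push_cast [Nat.cast_sub hM] at h3
    linarith
  rw [Finset.sum_add_distrib, Finset.sum_const, Finset.card_univ, Fintype.card_fin,
    ← Finset.sum_mul, hS, nsmul_eq_mul]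
  field_simp
  ring
end
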